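/- For every prime p, the polynomial C(X) = X·(p−X)^{p−1}/(p−1)^{p−1} ∈ ℚ[X] (which equals B_{1,p}(X/p)) is a Belyi polynomial of degree exactly p satisfying C(p) = 0, C(0) = 0 and C(1) = 1. Hence the lower bound ℋ(λ) ≥ p is sharp: the Belyi height of p equals p. -/

import Mathlib

open Polynomial

/-- A polynomial `B` over a field `F` is a *Belyi polynomial* if `B 0 ∈ {0,1}`,
`B 1 ∈ {0,1}`, and the derivative `B'` divides `B * (B - 1)`. -/
def IsBelyi {F : Type*} [Field F] (B : F[X]) : Prop :=
  B.eval 0 ∈ ({0, 1} : Set F) ∧ B.eval 1 ∈ ({0, 1} : Set F) ∧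
    B.derivative ∣ B * (B - 1)

/-- The *Belyi height* of `λ`: the minimal degree of a nonconstant Belyi polynomial
mapping `λ` into `{0, 1}`. -/
noncomputable def belyiHeight (F : Type*) [Field F] (lam : F) : ℕ :=
  sInf {d : ℕ | ∃ B : F[X], IsBelyi B ∧ 0 < B.natDegree ∧ B.natDegree = d ∧
    B.eval lam ∈ ({0, 1} : Set F)}

namespace BelyiProof

variable (p : ℕ)

lemma cne (hp : p.Prime) : ((p:ℚ) - 1) ≠ 0 := by
  have : (2:ℚ) ≤ p := by exact_mod_cast hp.two_le
  linarith

lemma ane (hp : p.Prime) : (1 / ((p:ℚ) - 1) ^ (p - 1)) ≠ 0 :=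
  one_div_ne_zero (pow_ne_zero _ (cne p hp))

lemma Yne : (C (p:ℚ) - X) ≠ 0 := by
  intro h
  have h1 : (C (p:ℚ) - X).coeff 1 = 0 := by rw [h]; simp
  simp [coeff_sub, coeff_C, coeff_X_one] at h1

lemma natDeg (hp : p.Prime) :
    (C (1 / ((p : ℚ) - 1) ^ (p - 1)) * (X * (C (p : ℚ) - X) ^ (p - 1))).natDegree = p := by
  have hY : (C (p:ℚ) - X).natDegree = 1 := by
    have : C (p:ℚ) - X = -(X - C (p:ℚ)) := by ring
    rw [this, natDegree_neg, natDegree_X_sub_C]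
  rw [natDegree_C_mul (ane p hp),
    natDegree_mul X_ne_zero (pow_ne_zero _ (Yne p)), natDegree_X, natDegree_pow, hY]
  have := hp.two_le
  omega

lemma evalp (hp : p.Prime) :
    (C (1 / ((p : ℚ) - 1) ^ (p - 1)) * (X * (C (p : ℚ) - X) ^ (p - 1))).eval (p:ℚ) = 0 := by
  have h1 : p - 1 ≠ 0 := by have := hp.two_le; omega
  simp [eval_mul, eval_pow, zero_pow h1]

lemma eval0 :
    (C (1 / ((p : ℚ) - 1) ^ (p - 1)) * (X * (C (p : ℚ) - X) ^ (p - 1))).eval 0 = 0 := by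
  simp

lemma eval1 (hp : p.Prime) :
    (C (1 / ((p : ℚ) - 1) ^ (p - 1)) * (X * (C (p : ℚ) - X) ^ (p - 1))).eval 1 = 1 := by
  have h := cne p hp
  simp only [eval_mul, eval_C, eval_X, eval_pow, eval_sub, one_mul]
  field_simp

lemma deriv_eq (a : ℚ) (h2 : 2 ≤ p) :
    derivative (C a * (X * (C (p : ℚ) - X) ^ (p - 1)))
      = C a * C (p:ℚ) * ((C (p : ℚ) - X) ^ (p - 2) * (1 - X)) := by
  have hk : p - 1 = (p - 2) + 1 := by omega
  rw [derivative_C_mul, derivative_mul, derivative_X, derivative_pow, derivative_sub,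
    derivative_C, derivative_X]
  have hcast : (((p - 1 : ℕ)) : ℚ) = (p:ℚ) - 1 := by
    push_cast [Nat.cast_sub (by omega : 1 ≤ p)]
    ring
  rw [hcast]
  have hk1 : p - 1 - 1 = p - 2 := by omega
  rw [hk1, hk, pow_succ]
  have : C ((p:ℚ) - 1) = C (p:ℚ) - 1 := by simp [map_sub]
  rw [this]
  ring

lemma dvd_aux (a : ℚ) (h2 : 2 ≤ p) (hpne : (p:ℚ) ≠ 0)
    (hroot : (C a * (X * (C (p : ℚ) - X) ^ (p - 1)) - 1).IsRoot 1) :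
    derivative (C a * (X * (C (p : ℚ) - X) ^ (p - 1)))
      ∣ (C a * (X * (C (p : ℚ) - X) ^ (p - 1)))
        * ((C a * (X * (C (p : ℚ) - X) ^ (p - 1))) - 1) := by
  obtain ⟨U, hU⟩ := (dvd_iff_isRoot.mpr hroot)
  have hk : p - 1 = (p - 2) + 1 := by omega
  have hdvd2 : derivative (C a * (X * (C (p : ℚ) - X) ^ (p - 1)))
      ∣ C (p:ℚ) * ((C a * (X * (C (p : ℚ) - X) ^ (p - 1)))
        * ((C a * (X * (C (p : ℚ) - X) ^ (p - 1))) - 1)) := by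
    refine ⟨X * (C (p:ℚ) - X) * (-U), ?_⟩
    rw [deriv_eq p a h2, hU, hk, pow_succ]
    simp only [C_1]
    ring
  have hrw : (C a * (X * (C (p : ℚ) - X) ^ (p - 1)))
        * ((C a * (X * (C (p : ℚ) - X) ^ (p - 1))) - 1)
      = C ((p:ℚ))⁻¹ * (C (p:ℚ) * ((C a * (X * (C (p : ℚ) - X) ^ (p - 1)))
        * ((C a * (X * (C (p : ℚ) - X) ^ (p - 1))) - 1))) := by
    have hC : C ((p:ℚ))⁻¹ * C (p:ℚ) = 1 := by
      rw [← C_mul, inv_mul_cancel₀ hpne, C_1]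
    rw [← mul_assoc (C ((p:ℚ))⁻¹) (C (p:ℚ)), hC, one_mul]
  rw [hrw]
  exact Dvd.dvd.mul_left hdvd2 _

lemma dvd_lemma (hp : p.Prime) :
    derivative (C (1 / ((p : ℚ) - 1) ^ (p - 1)) * (X * (C (p : ℚ) - X) ^ (p - 1)))
      ∣ (C (1 / ((p : ℚ) - 1) ^ (p - 1)) * (X * (C (p : ℚ) - X) ^ (p - 1)))
        * ((C (1 / ((p : ℚ) - 1) ^ (p - 1)) * (X * (C (p : ℚ) - X) ^ (p - 1))) - 1) := by
  refine dvd_aux p _ hp.two_le (by exact_mod_cast hp.ne_zero) ?_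
  simp only [IsRoot, eval_sub, eval_one, sub_eq_zero]
  exact eval1 p hp

/-- mult-counting contradiction in the coprime case -/
lemma aux_cop {k : Type*} [Field k] (P Q T : k[X]) (δ : k) (r : k)
    (hE : C δ * (P * Q) = derivative P * T)
    (hδ : δ ≠ 0) (hP : P ≠ 0) (hQ : Q ≠ 0) (hT : T ≠ 0)
    (hP' : derivative P ≠ 0)
    (hr : P.IsRoot r) (hQr : ¬ Q.IsRoot r) (h2 : 2 ≤ rootMultiplicity r T) : False := by
  classical
  have hm1 : 1 ≤ rootMultiplicity r P := (rootMultiplicity_pos hP).mpr hr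
  have hCδ : (C δ : k[X]) ≠ 0 := by simpa using hδ
  have hL : rootMultiplicity r (C δ * (P * Q)) = rootMultiplicity r P := by
    rw [rootMultiplicity_mul (mul_ne_zero hCδ (mul_ne_zero hP hQ)),
      rootMultiplicity_mul (mul_ne_zero hP hQ),
      rootMultiplicity_eq_zero (show ¬ (C δ).IsRoot r by simp [IsRoot, hδ]),
      rootMultiplicity_eq_zero hQr]
    omega
  have hR : rootMultiplicity r (derivative P * T)
      = rootMultiplicity r (derivative P) + rootMultiplicity r T :=
    rootMultiplicity_mul (mul_ne_zero hP' hT)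
  have hdle := rootMultiplicity_sub_one_le_derivative_rootMultiplicity_of_ne_zero P r hP'
  rw [hE, hR] at hL
  omega

section Core
variable {K : Type*} [Field K] [CharZero K] [IsAlgClosed K]

set_option maxHeartbeats 2000000 in
theorem core (A : ValuationSubring K) (B : K[X]) (hd1 : 1 ≤ B.natDegree)
    (hdvd : derivative B ∣ B * (B - 1))
    (hn : ∀ n : ℕ, 1 ≤ n → n ≤ B.natDegree → A.valuation (n : K) = 1)
    (hroots : ∀ s ∈ (B * (B - 1)).roots, A.valuation s ≤ 1)
    (hpair : ∃ s₁ ∈ (B * (B - 1)).roots, ∃ s₂ ∈ (B * (B - 1)).roots,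
      A.valuation (s₁ - s₂) = 1) :
    ∀ s ∈ (B * (B - 1)).roots, ∀ t ∈ (B * (B - 1)).roots, s ≠ t →
      A.valuation (s - t) = 1 := by
  classical
  set d := B.natDegree with hd
  have hB0 : B ≠ 0 := fun h => by simp [hd, h] at hd1
  have hdeg1 : (B - 1).natDegree = d := by
    rw [show (1 : K[X]) = C 1 by simp, natDegree_sub_C]
  have hB1 : (B - 1) ≠ 0 := by
    intro h
    rw [h, natDegree_zero] at hdeg1
    omega
  have hBB : B * (B - 1) ≠ 0 := mul_ne_zero hB0 hB1
  set c := B.leadingCoeff with hc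
  have hc0 : c ≠ 0 := leadingCoeff_ne_zero.mpr hB0
  have hlc1 : (B - 1).leadingCoeff = c := by
    rw [leadingCoeff, hdeg1, coeff_sub, hc, leadingCoeff, ← hd]
    have : (1 : K[X]).coeff d = 0 := by
      rw [coeff_one, if_neg (by omega)]
    rw [this, sub_zero]
  -- roots and splitting
  have hsplB : Splits B := IsAlgClosed.splits B
  have hsplN : Splits (B - 1) := IsAlgClosed.splits _
  set RA := B.roots with hRA
  set RN := (B - 1).roots with hRN
  have hcardA : Multiset.card RA = d := splits_iff_card_roots.mp hsplB
  have hcardN : Multiset.card RN = d := by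
    rw [hRN, splits_iff_card_roots.mp hsplN, hdeg1]
  set M := (RA.map fun a => X - C a).prod with hM
  set N := (RN.map fun a => X - C a).prod with hN
  have hBM : B = C c * M := hsplB.eq_prod_roots
  have hB1N : B - 1 = C c * N := by
    have := hsplN.eq_prod_roots
    rwa [hlc1] at this
  have hMmonic : M.Monic := monic_multiset_prod_of_monic _ _ (fun i _ => monic_X_sub_C i)
  have hNmonic : N.Monic := monic_multiset_prod_of_monic _ _ (fun i _ => monic_X_sub_C i)
  have hMdeg : M.natDegree = d := by
    have : B.natDegree = (C c * M).natDegree := by rw [← hBM]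
    rw [natDegree_C_mul hc0] at this
    omega
  -- derivative facts
  have hder1 : derivative B = C c * derivative M := by
    conv_lhs => rw [hBM]
    rw [derivative_C_mul]
  have hderN : derivative B = C c * derivative N := by
    have h1 : derivative B = derivative (B - 1) := by
      rw [derivative_sub, derivative_one, sub_zero]
    rw [h1]
    conv_lhs => rw [hB1N]
    rw [derivative_C_mul]
  have hCc0 : (C c : K[X]) ≠ 0 := by simpa using hc0
  have hMN' : derivative M = derivative N :=
    mul_left_cancel₀ hCc0 (hder1 ▸ hderN)
  have hMsubN : M - N = C c⁻¹ := by
    apply mul_left_cancel₀ hCc0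
    have h1 : C c * M - C c * N = 1 := by rw [← hBM, ← hB1N]; ring
    rw [mul_sub, h1, ← C_mul, mul_inv_cancel₀ hc0, C_1]
  -- derivative of B is nonzero of degree d - 1
  have hdK0 : ((d : K)) ≠ 0 := Nat.cast_ne_zero.mpr (by omega)
  have hcoefd : (derivative B).coeff (d - 1) = c * d := by
    rw [coeff_derivative, show d - 1 + 1 = d by omega]
    have h2 : ((d - 1 : ℕ) : K) + 1 = (d : K) := by
      push_cast [Nat.cast_sub hd1]
      ring
    rw [h2, hd, coeff_natDegree, ← hc, ← hd]
  have hcd0 : c * (d : K) ≠ 0 := mul_ne_zero hc0 hdK0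
  have hderB0 : derivative B ≠ 0 := fun h => hcd0 (by rw [← hcoefd, h, coeff_zero])
  have hdegder : (derivative B).natDegree = d - 1 :=
    le_antisymm (natDegree_derivative_le B)
      (le_natDegree_of_ne_zero (hcoefd ▸ hcd0))
  have hlcder : (derivative B).leadingCoeff = c * d := by
    rw [leadingCoeff, hdegder, hcoefd]
  -- the cofactor W
  obtain ⟨W, hW⟩ := hdvd
  have hW0 : W ≠ 0 := by
    intro h
    rw [h, mul_zero] at hW
    exact hBB hW
  have hdegW : W.natDegree = d + 1 := by
    have h1 : (B * (B - 1)).natDegree = d + d := by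
      rw [natDegree_mul hB0 hB1, hdeg1]
    have h2 : (derivative B * W).natDegree = (d - 1) + W.natDegree := by
      rw [natDegree_mul hderB0 hW0, hdegder]
    rw [hW, h2] at h1
    omega
  -- multiplicities of W
  have hrmW : ∀ x : K, rootMultiplicity x W = if (B * (B - 1)).IsRoot x then 1 else 0 := by
    intro x
    have heq : rootMultiplicity x B + rootMultiplicity x (B - 1)
        = rootMultiplicity x (derivative B) + rootMultiplicity x W := by
      rw [← rootMultiplicity_mul (mul_ne_zero hderB0 hW0), ← hW, rootMultiplicity_mul hBB]
    by_cases hxB : B.IsRoot x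
    · have hx1 : ¬ (B - 1).IsRoot x := by
        simp only [IsRoot, eval_sub, eval_one, sub_eq_zero]
        rw [hxB]
        exact fun h => one_ne_zero h.symm
      have hrm1 : rootMultiplicity x (B - 1) = 0 := rootMultiplicity_eq_zero hx1
      have hder : rootMultiplicity x (derivative B) = rootMultiplicity x B - 1 :=
        derivative_rootMultiplicity_of_root hxB
      have hpos : 1 ≤ rootMultiplicity x B := (rootMultiplicity_pos hB0).mpr hxB
      have hroot : (B * (B - 1)).IsRoot x := by
        simp [IsRoot, eval_mul, hxB.eq_zero]
      rw [if_pos hroot]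
      omega
    · by_cases hx1 : (B - 1).IsRoot x
      · have hder : rootMultiplicity x (derivative B) = rootMultiplicity x (B - 1) - 1 := by
          have hd2 : derivative B = derivative (B - 1) := by
            rw [derivative_sub, derivative_one, sub_zero]
          rw [hd2]
          exact derivative_rootMultiplicity_of_root hx1
        have hpos : 1 ≤ rootMultiplicity x (B - 1) := (rootMultiplicity_pos hB1).mpr hx1
        have hrm0 : rootMultiplicity x B = 0 := rootMultiplicity_eq_zero hxB
        have hroot : (B * (B - 1)).IsRoot x := by
          simp [IsRoot, eval_mul, hx1.eq_zero]
        rw [if_pos hroot]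
        omega
      · have hroot : ¬ (B * (B - 1)).IsRoot x := by
          simp only [IsRoot, eval_mul, mul_eq_zero]
          tauto
        rw [if_neg hroot]
        have h1 : rootMultiplicity x B = 0 := rootMultiplicity_eq_zero hxB
        have h2 : rootMultiplicity x (B - 1) = 0 := rootMultiplicity_eq_zero hx1
        have h3 : 0 ≤ rootMultiplicity x (derivative B) := Nat.zero_le _
        omega
  -- SS : the distinct roots
  set SS := (B * (B - 1)).roots.dedup with hSS
  have hWroots : W.roots = SS := by
    refine Multiset.ext.mpr fun x => ?_
    rw [count_roots, Multiset.count_dedup, hrmW]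
    by_cases hx : x ∈ (B * (B - 1)).roots
    · rw [if_pos hx, if_pos ((mem_roots'.mp hx).2)]
    · rw [if_neg hx]
      rw [if_neg (fun h => hx (mem_roots'.mpr ⟨hBB, h⟩))]
  have hsplW : Splits W := IsAlgClosed.splits W
  have hcardSS : Multiset.card SS = d + 1 := by
    rw [← hWroots, splits_iff_card_roots.mp hsplW, hdegW]
  set T := (SS.map fun a => X - C a).prod with hT
  have hWT : W = C W.leadingCoeff * T := by
    have := hsplW.eq_prod_roots
    rwa [hWroots] at this
  have hw0 : W.leadingCoeff ≠ 0 := leadingCoeff_ne_zero.mpr hW0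
  have hlcrel : c * c = c * (d : K) * W.leadingCoeff := by
    have h1 := congrArg leadingCoeff hW
    rwa [leadingCoeff_mul, leadingCoeff_mul, hlc1, hlcder, ← hc] at h1
  -- master identity
  have hE : C (d : K) * (M * N) = derivative M * T := by
    apply mul_left_cancel₀ (a := C (c * W.leadingCoeff))
      (by simpa using mul_ne_zero hc0 hw0)
    calc C (c * W.leadingCoeff) * (C (d : K) * (M * N))
        = C (c * (d : K) * W.leadingCoeff) * (M * N) := by
          rw [C_mul, C_mul, C_mul]; ring
      _ = C (c * c) * (M * N) := by rw [← hlcrel]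
      _ = (C c * M) * (C c * N) := by rw [C_mul]; ring
      _ = (C c * derivative M) * (C W.leadingCoeff * T) := by
          rw [← hBM, ← hB1N, ← hder1, ← hWT]; exact hW
      _ = C (c * W.leadingCoeff) * (derivative M * T) := by rw [C_mul]; ring
  -- integral lifts
  have hRA_le : RA ≤ (B * (B - 1)).roots := by
    rw [roots_mul hBB]
    exact Multiset.le_add_right _ _
  have hRN_le : RN ≤ (B * (B - 1)).roots := by
    rw [roots_mul hBB]
    exact Multiset.le_add_left _ _
  have hSS_le : ∀ x ∈ SS, x ∈ (B * (B - 1)).roots := fun x hx => Multiset.mem_dedup.mp hx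
  have hmemA : ∀ s ∈ (B * (B - 1)).roots, s ∈ A :=
    fun s hs => (A.valuation_le_one_iff s).mp (hroots s hs)
  set RAo : Multiset A := RA.attach.map
    (fun x => (⟨x.1, hmemA x.1 (Multiset.mem_of_le hRA_le x.2)⟩ : A)) with hRAo
  set RNo : Multiset A := RN.attach.map
    (fun x => (⟨x.1, hmemA x.1 (Multiset.mem_of_le hRN_le x.2)⟩ : A)) with hRNo
  set SSo : Multiset A := SS.attach.map
    (fun x => (⟨x.1, hmemA x.1 (hSS_le x.1 x.2)⟩ : A)) with hSSo
  have hRAo_map : RAo.map (fun a : A => (a : K)) = RA := by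
    rw [hRAo, Multiset.map_map]
    exact (Multiset.map_congr rfl (fun x _ => rfl)).trans (Multiset.attach_map_val RA)
  have hRNo_map : RNo.map (fun a : A => (a : K)) = RN := by
    rw [hRNo, Multiset.map_map]
    exact (Multiset.map_congr rfl (fun x _ => rfl)).trans (Multiset.attach_map_val RN)
  have hSSo_map : SSo.map (fun a : A => (a : K)) = SS := by
    rw [hSSo, Multiset.map_map]
    exact (Multiset.map_congr rfl (fun x _ => rfl)).trans (Multiset.attach_map_val SS)
  set MO : Polynomial A := (RAo.map (fun a => X - C a)).prod with hMO
  set NO : Polynomial A := (RNo.map (fun a => X - C a)).prod with hNO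
  set TO : Polynomial A := (SSo.map (fun a => X - C a)).prod with hTO
  have hmap_lin : ∀ m : Multiset A,
      ((m.map (fun a => X - C a)).prod).map (algebraMap A K)
        = ((m.map (fun a : A => (a : K))).map (fun s => X - C s)).prod := by
    intro m
    rw [Polynomial.map_multiset_prod, Multiset.map_map, Multiset.map_map]
    congr 1
    apply Multiset.map_congr rfl
    intro a _
    simp
  have hMOmap : MO.map (algebraMap A K) = M := by
    rw [hMO, hmap_lin, hRAo_map]
  have hNOmap : NO.map (algebraMap A K) = N := by
    rw [hNO, hmap_lin, hRNo_map]
  have hTOmap : TO.map (algebraMap A K) = T := by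
    rw [hTO, hmap_lin, hSSo_map]
  have hinj : Function.Injective (algebraMap A K) := fun x y h => Subtype.ext h
  have hEo : C ((d : A)) * (MO * NO) = derivative MO * TO := by
    apply Polynomial.map_injective (algebraMap A K) hinj
    rw [Polynomial.map_mul, Polynomial.map_mul, Polynomial.map_mul, Polynomial.map_C,
      ← derivative_map, hMOmap, hNOmap, hTOmap]
    rw [show ((algebraMap A K) ((d : A))) = ((d : K)) from by push_cast; rfl]
    exact hE
  have hMNOsub : MO - NO = C ((MO - NO).coeff 0) := by
    apply Polynomial.map_injective (algebraMap A K) hinj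
    have h1 : (MO - NO).map (algebraMap A K) = C c⁻¹ := by
      rw [Polynomial.map_sub, hMOmap, hNOmap, hMsubN]
    have h2 : (algebraMap A K) ((MO - NO).coeff 0) = c⁻¹ := by
      rw [← coeff_map, h1, coeff_C]
      simp
    rw [h1, Polynomial.map_C, h2]
  set eO : A := (MO - NO).coeff 0 with heO
  -- residue field
  set k := IsLocalRing.ResidueField A with hk
  set π : A →+* k := IsLocalRing.residue A with hπ
  set Mk := MO.map π with hMk
  set Nk := NO.map π with hNk
  set Tk := TO.map π with hTk
  have hEk : C ((d : k)) * (Mk * Nk) = derivative Mk * Tk := by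
    have h := congrArg (Polynomial.map π) hEo
    rw [Polynomial.map_mul, Polynomial.map_mul, Polynomial.map_mul, Polynomial.map_C,
      ← derivative_map] at h
    rw [show (π ((d : A))) = ((d : k)) from map_natCast π d] at h
    exact h
  have hMNk : Mk - Nk = C (π eO) := by
    have := congrArg (Polynomial.map π) hMNOsub
    rwa [Polynomial.map_sub, Polynomial.map_C] at this
  have hmap_link : ∀ m : Multiset A,
      ((m.map (fun a => X - C a)).prod).map π
        = ((m.map π).map (fun s => X - C s)).prod := by
    intro m
    rw [Polynomial.map_multiset_prod, Multiset.map_map, Multiset.map_map]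
    congr 1
    apply Multiset.map_congr rfl
    intro a _
    simp
  have hMkprod : Mk = ((RAo.map π).map (fun s => X - C s)).prod := by
    rw [hMk, hMO, hmap_link]
  have hNkprod : Nk = ((RNo.map π).map (fun s => X - C s)).prod := by
    rw [hNk, hNO, hmap_link]
  have hTkprod : Tk = ((SSo.map π).map (fun s => X - C s)).prod := by
    rw [hTk, hTO, hmap_link]
  have hMkroots : Mk.roots = RAo.map π := by
    rw [hMkprod, roots_multiset_prod_X_sub_C]
  have hTkroots : Tk.roots = SSo.map π := by
    rw [hTkprod, roots_multiset_prod_X_sub_C]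
  have hMkmonic : Mk.Monic :=
    hMkprod ▸ monic_multiset_prod_of_monic _ _ (fun i _ => monic_X_sub_C i)
  have hNkmonic : Nk.Monic :=
    hNkprod ▸ monic_multiset_prod_of_monic _ _ (fun i _ => monic_X_sub_C i)
  have hTkmonic : Tk.Monic :=
    hTkprod ▸ monic_multiset_prod_of_monic _ _ (fun i _ => monic_X_sub_C i)
  have hMk0 : Mk ≠ 0 := hMkmonic.ne_zero
  have hNk0 : Nk ≠ 0 := hNkmonic.ne_zero
  have hTk0 : Tk ≠ 0 := hTkmonic.ne_zero
  have hMkdeg : Mk.natDegree = d := by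
    have h1 : MO.Monic := monic_multiset_prod_of_monic _ _ (fun i _ => monic_X_sub_C i)
    have h2 : MO.natDegree = d := by
      rw [← h1.natDegree_map (algebraMap A K), hMOmap, hMdeg]
    rw [hMk, h1.natDegree_map, h2]
  -- natural numbers are nonzero in k
  have hknat : ∀ m : ℕ, 1 ≤ m → m ≤ d → ((m : ℕ) : k) ≠ 0 := by
    intro m h1 h2 h0
    have hm0 : π ((m : ℕ) : A) = 0 := by rw [map_natCast]; exact h0
    have hmem : ((m : ℕ) : A) ∈ IsLocalRing.maximalIdeal A :=
      Ideal.Quotient.eq_zero_iff_mem.mp hm0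
    have hlt := (A.valuation_lt_one_iff _).mp hmem
    have hcast : (((m : ℕ) : A) : K) = ((m : ℕ) : K) := by push_cast; rfl
    rw [hcast, hn m h1 h2] at hlt
    exact lt_irrefl _ hlt
  have hdk0 : ((d : k)) ≠ 0 := hknat d hd1 le_rfl
  have hderMk0 : derivative Mk ≠ 0 := by
    intro h
    have hcf : (derivative Mk).coeff (d - 1) = (d : k) := by
      rw [coeff_derivative, show d - 1 + 1 = d by omega, ← hMkdeg, coeff_natDegree,
        hMkmonic.leadingCoeff, hMkdeg]
      have : ((d - 1 : ℕ) : k) + 1 = (d : k) := by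
        push_cast [Nat.cast_sub hd1]
        ring
      rw [this, one_mul]
    rw [h, coeff_zero] at hcf
    exact hdk0 hcf.symm
  have hderMNk : derivative Mk = derivative Nk := by
    have h1 := congrArg derivative hMNk
    rw [derivative_sub, derivative_C] at h1
    exact sub_eq_zero.mp h1
  -- distinguished residues from hpair
  obtain ⟨s₁, hs₁, s₂, hs₂, hv12⟩ := hpair
  have hs₁SS : s₁ ∈ SS := Multiset.mem_dedup.mpr hs₁
  have hs₂SS : s₂ ∈ SS := Multiset.mem_dedup.mpr hs₂
  have hs₁A : s₁ ∈ A := hmemA s₁ hs₁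
  have hs₂A : s₂ ∈ A := hmemA s₂ hs₂
  have hres_ne : π ⟨s₁, hs₁A⟩ ≠ π ⟨s₂, hs₂A⟩ := by
    intro h
    have h0 : π (⟨s₁, hs₁A⟩ - ⟨s₂, hs₂A⟩) = 0 := by rw [map_sub, h, sub_self]
    have hmm : (⟨s₁, hs₁A⟩ - ⟨s₂, hs₂A⟩ : A) ∈ IsLocalRing.maximalIdeal A :=
      Ideal.Quotient.eq_zero_iff_mem.mp h0
    have hlt := (A.valuation_lt_one_iff _).mp hmm
    have hco : ((⟨s₁, hs₁A⟩ - ⟨s₂, hs₂A⟩ : A) : K) = s₁ - s₂ := rfl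
    rw [hco, hv12] at hlt
    exact lt_irrefl _ hlt
  have hmemTk : ∀ (x : K) (hx : x ∈ SS) (hxA : x ∈ A), π ⟨x, hxA⟩ ∈ Tk.roots := by
    intro x hx hxA
    rw [hTkroots]
    refine Multiset.mem_map.mpr ⟨⟨x, hxA⟩, ?_, rfl⟩
    rw [hSSo]
    exact Multiset.mem_map.mpr ⟨⟨x, hx⟩, Multiset.mem_attach _ _, rfl⟩
  -- main goal
  intro s hs t ht hst
  by_contra hne
  have hsA : s ∈ A := hmemA s hs
  have htA : t ∈ A := hmemA t ht
  have hle : A.valuation (s - t) ≤ 1 :=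
    (A.valuation_le_one_iff _).mpr (sub_mem hsA htA)
  have hlt : A.valuation (s - t) < 1 := lt_of_le_of_ne hle hne
  have hmemM : (⟨s, hsA⟩ - ⟨t, htA⟩ : A) ∈ IsLocalRing.maximalIdeal A := by
    rw [A.valuation_lt_one_iff]
    exact hlt
  have hres : π ⟨s, hsA⟩ = π ⟨t, htA⟩ := by
    have h0 : π (⟨s, hsA⟩ - ⟨t, htA⟩) = 0 := Ideal.Quotient.eq_zero_iff_mem.mpr hmemM
    rw [map_sub, sub_eq_zero] at h0
    exact h0
  set r := π ⟨s, hsA⟩ with hrdef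
  have hsSS : s ∈ SS := Multiset.mem_dedup.mpr hs
  have htSS : t ∈ SS := Multiset.mem_dedup.mpr ht
  have hsSSo : (⟨s, hsA⟩ : A) ∈ SSo := by
    rw [hSSo]
    exact Multiset.mem_map.mpr ⟨⟨s, hsSS⟩, Multiset.mem_attach _ _, rfl⟩
  have htSSo : (⟨t, htA⟩ : A) ∈ SSo := by
    rw [hSSo]
    exact Multiset.mem_map.mpr ⟨⟨t, htSS⟩, Multiset.mem_attach _ _, rfl⟩
  have hnodupSSo : SSo.Nodup := by
    rw [hSSo]
    refine Multiset.Nodup.map ?_ ?_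
    · intro x y h
      exact Subtype.ext (congrArg (fun a : A => (a : K)) h)
    · exact Multiset.nodup_attach.mpr (Multiset.nodup_dedup _)
  have hstA : (⟨s, hsA⟩ : A) ≠ ⟨t, htA⟩ := fun h => hst (congrArg Subtype.val h)
  have hpairle : ({⟨s, hsA⟩, ⟨t, htA⟩} : Multiset A) ≤ SSo := by
    refine (Multiset.le_iff_subset ?_).mpr ?_
    · simp only [Multiset.insert_eq_cons, Multiset.nodup_cons, Multiset.mem_singleton,
        Multiset.nodup_singleton, and_true]
      exact hstA
    · intro x hx
      simp only [Multiset.insert_eq_cons, Multiset.mem_cons, Multiset.mem_singleton] at hx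
      rcases hx with h | h
      · rw [h]; exact hsSSo
      · rw [h]; exact htSSo
  have hcnt : 2 ≤ Multiset.count r (SSo.map π) := by
    have h1 : Multiset.count r (({⟨s, hsA⟩, ⟨t, htA⟩} : Multiset A).map π) = 2 := by
      simp only [Multiset.insert_eq_cons, Multiset.map_cons, Multiset.map_singleton]
      rw [← hrdef, ← hres]
      rw [Multiset.count_cons_self, Multiset.count_singleton, if_pos rfl]
    calc (2 : ℕ) = Multiset.count r (({⟨s, hsA⟩, ⟨t, htA⟩} : Multiset A).map π) := h1.symm
      _ ≤ Multiset.count r (SSo.map π) :=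
          Multiset.count_le_of_le _ (Multiset.map_le_map hpairle)
  have hcnt2 : 2 ≤ rootMultiplicity r Tk := by
    rw [← count_roots, hTkroots]; exact hcnt
  by_cases heq0 : π eO = 0
  · -- Mk = Nk : all residues coincide, contradicting hres_ne
    have hMkNk : Mk = Nk := by
      have h1 := hMNk
      rw [heq0, C_0] at h1
      exact sub_eq_zero.mp h1
    have hEk2 : C ((d : k)) * (Mk * Mk) = derivative Mk * Tk := by
      rw [show Mk * Mk = Mk * Nk by rw [← hMkNk]]
      exact hEk
    have hTsubM : ∀ x : k, Tk.IsRoot x → Mk.IsRoot x := by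
      intro x hx
      have h1 := congrArg (eval x) hEk2
      rw [eval_mul, eval_mul, eval_mul, eval_C, hx.eq_zero, mul_zero] at h1
      have h2 := (mul_eq_zero.mp h1).resolve_left hdk0
      exact mul_self_eq_zero.mp h2
    have hmulT : ∀ x ∈ Mk.roots.toFinset,
        rootMultiplicity x Tk = rootMultiplicity x Mk + 1 := by
      intro x hx
      have hxr : Mk.IsRoot x := by
        rw [Multiset.mem_toFinset] at hx
        exact (mem_roots'.mp hx).2
      have hm1 : 1 ≤ rootMultiplicity x Mk := (rootMultiplicity_pos hMk0).mpr hxr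
      have hmd : rootMultiplicity x Mk ≤ d := by
        have h1 := natDegree_le_of_dvd (pow_rootMultiplicity_dvd Mk x) hMk0
        rwa [natDegree_pow, natDegree_X_sub_C, mul_one, hMkdeg] at h1
      have hder : rootMultiplicity x (derivative Mk) = rootMultiplicity x Mk - 1 :=
        derivative_rootMultiplicity_of_root_of_mem_nonZeroDivisors hxr
          (mem_nonZeroDivisors_of_ne_zero (hknat _ hm1 hmd))
      have hCd : (C ((d : k)) : k[X]) ≠ 0 := by
        rw [ne_eq, C_eq_zero]
        exact hdk0
      have hrC : rootMultiplicity x (C ((d : k))) = 0 :=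
        rootMultiplicity_eq_zero (by simp [IsRoot, hdk0])
      have hL := congrArg (rootMultiplicity x) hEk2
      rw [rootMultiplicity_mul (mul_ne_zero hCd (mul_ne_zero hMk0 hMk0)),
        rootMultiplicity_mul (mul_ne_zero hMk0 hMk0),
        rootMultiplicity_mul (mul_ne_zero hderMk0 hTk0), hrC, hder] at hL
      omega
    have hfeq : Tk.roots.toFinset = Mk.roots.toFinset := by
      ext x
      simp only [Multiset.mem_toFinset, mem_roots', hMk0, hTk0, ne_eq, not_false_iff, true_and]
      constructor
      · exact hTsubM x
      · intro hxr
        have h1 := hmulT x (by rw [Multiset.mem_toFinset]; exact mem_roots'.mpr ⟨hMk0, hxr⟩)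
        have hpos : 0 < rootMultiplicity x Tk := by omega
        exact (rootMultiplicity_pos hTk0).mp hpos
    have hcardT : Multiset.card Tk.roots = d + 1 := by
      rw [hTkroots, Multiset.card_map, hSSo, Multiset.card_map, Multiset.card_attach, hcardSS]
    have hcardM : Multiset.card Mk.roots = d := by
      rw [hMkroots, Multiset.card_map, hRAo, Multiset.card_map, Multiset.card_attach, hcardA]
    have hsum : d + 1 = d + (Mk.roots.toFinset).card := by
      calc d + 1 = Multiset.card Tk.roots := hcardT.symm
        _ = ∑ x ∈ Tk.roots.toFinset, Multiset.count x Tk.roots :=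
            (Multiset.toFinset_sum_count_eq _).symm
        _ = ∑ x ∈ Mk.roots.toFinset, rootMultiplicity x Tk := by
            rw [hfeq]
            exact Finset.sum_congr rfl (fun x _ => by rw [count_roots])
        _ = ∑ x ∈ Mk.roots.toFinset, (rootMultiplicity x Mk + 1) :=
            Finset.sum_congr rfl hmulT
        _ = (∑ x ∈ Mk.roots.toFinset, rootMultiplicity x Mk) + (Mk.roots.toFinset).card := by
            rw [Finset.sum_add_distrib, Finset.sum_const, smul_eq_mul, mul_one]
        _ = (∑ x ∈ Mk.roots.toFinset, Multiset.count x Mk.roots) + (Mk.roots.toFinset).card := by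
            congr 1
            exact Finset.sum_congr rfl (fun x _ => by rw [count_roots])
        _ = Multiset.card Mk.roots + (Mk.roots.toFinset).card := by
            rw [Multiset.toFinset_sum_count_eq]
        _ = d + (Mk.roots.toFinset).card := by rw [hcardM]
    have hcard1 : (Mk.roots.toFinset).card = 1 := by omega
    have hr1 : π ⟨s₁, hs₁A⟩ ∈ Mk.roots.toFinset := by
      rw [← hfeq, Multiset.mem_toFinset]
      exact hmemTk s₁ hs₁SS hs₁A
    have hr2 : π ⟨s₂, hs₂A⟩ ∈ Mk.roots.toFinset := by
      rw [← hfeq, Multiset.mem_toFinset]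
      exact hmemTk s₂ hs₂SS hs₂A
    exact hres_ne (Finset.card_le_one.mp (le_of_eq hcard1) _ hr1 _ hr2)
  · -- coprime case
    have hcop : IsCoprime Mk Nk := by
      refine ⟨C (π eO)⁻¹, -C (π eO)⁻¹, ?_⟩
      have h1 : C (π eO)⁻¹ * (Mk - Nk) = 1 := by
        rw [hMNk, ← C_mul, inv_mul_cancel₀ heq0, C_1]
      calc C (π eO)⁻¹ * Mk + -C (π eO)⁻¹ * Nk = C (π eO)⁻¹ * (Mk - Nk) := by ring
        _ = 1 := h1
    have hTr : Tk.IsRoot r := by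
      have hpos : 0 < rootMultiplicity r Tk := by omega
      exact (rootMultiplicity_pos hTk0).mp hpos
    have hrootMN : Mk.IsRoot r ∨ Nk.IsRoot r := by
      have h1 := congrArg (eval r) hEk
      rw [eval_mul, eval_mul, eval_mul, eval_C, hTr.eq_zero, mul_zero] at h1
      have h2 := (mul_eq_zero.mp h1).resolve_left hdk0
      exact mul_eq_zero.mp h2
    have hnotboth : ¬ (Mk.IsRoot r ∧ Nk.IsRoot r) := by
      rintro ⟨h1, h2⟩
      obtain ⟨u, w, huw⟩ := hcop
      have h3 := congrArg (eval r) huw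
      rw [eval_add, eval_mul, eval_mul, h1.eq_zero, h2.eq_zero, mul_zero, mul_zero,
        add_zero, eval_one] at h3
      exact one_ne_zero h3.symm
    rcases hrootMN with h | h
    · exact aux_cop Mk Nk Tk _ r hEk hdk0 hMk0 hNk0 hTk0 hderMk0 h
        (fun hh => hnotboth ⟨h, hh⟩) hcnt2
    · have hEk' : C ((d : k)) * (Nk * Mk) = derivative Nk * Tk := by
        rw [mul_comm Nk Mk, ← hderMNk]
        exact hEk
      have hderNk0 : derivative Nk ≠ 0 := by rw [← hderMNk]; exact hderMk0
      exact aux_cop Nk Mk Tk _ r hEk' hdk0 hNk0 hMk0 hTk0 hderNk0 h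
        (fun hh => hnotboth ⟨hh, h⟩) hcnt2

end Core

lemma exists_val (p : ℕ) (hp : p.Prime) :
    ∃ A : ValuationSubring (AlgebraicClosure ℚ),
      A.valuation (p : AlgebraicClosure ℚ) < 1 ∧
      ∀ m : ℤ, A.valuation (m : AlgebraicClosure ℚ) ≤ 1 := by
  have hpZ : Prime (p : ℤ) := (Nat.prime_iff_prime_int.mp hp)
  haveI hPprime : (Ideal.span {(p:ℤ)}).IsPrime :=
    (Ideal.span_singleton_prime hpZ.ne_zero).mpr hpZ
  set P : Ideal ℤ := Ideal.span {(p:ℤ)} with hP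
  have hg : ∀ y : P.primeCompl, IsUnit ((Int.castRingHom (AlgebraicClosure ℚ)) (y : ℤ)) := by
    intro y
    refine isUnit_iff_ne_zero.mpr ?_
    have hy0 : (y : ℤ) ≠ 0 := by
      intro h
      exact y.2 (by rw [h]; exact P.zero_mem)
    simpa using hy0
  set f : Localization.AtPrime P →+* AlgebraicClosure ℚ := IsLocalization.lift hg with hf
  obtain ⟨A, hA, hloc⟩ := IsLocalRing.exists_factor_valuationRing f
  have hfeq : ∀ m : ℤ, f (algebraMap ℤ (Localization.AtPrime P) m) = (m : AlgebraicClosure ℚ) := by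
    intro m
    rw [hf, IsLocalization.lift_eq]
    simp
  refine ⟨A, ?_, ?_⟩
  · have hmem : algebraMap ℤ (Localization.AtPrime P) (p:ℤ) ∈
        IsLocalRing.maximalIdeal (Localization.AtPrime P) := by
      rw [IsLocalization.AtPrime.to_map_mem_maximal_iff _ P]
      exact Ideal.subset_span rfl
    have hnu : ¬ IsUnit (algebraMap ℤ (Localization.AtPrime P) (p:ℤ)) :=
      mem_nonunits_iff.mp ((IsLocalRing.mem_maximalIdeal _).mp hmem)
    have hnu2 : ¬ IsUnit ((⟨f (algebraMap ℤ (Localization.AtPrime P) (p:ℤ)),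
        hA _⟩ : A)) := by
      intro h
      exact hnu (hloc.map_nonunit _ h)
    have hmemA : ((⟨f (algebraMap ℤ (Localization.AtPrime P) (p:ℤ)), hA _⟩ : A))
        ∈ IsLocalRing.maximalIdeal A :=
      (IsLocalRing.mem_maximalIdeal _).mpr (mem_nonunits_iff.mpr hnu2)
    have hval := (A.valuation_lt_one_iff _).mp hmemA
    have hco : (f (algebraMap ℤ (Localization.AtPrime P) (p:ℤ)))
        = (p : AlgebraicClosure ℚ) := by
      rw [hfeq]
      simp
    have hval2 : A.valuation (f ((algebraMap ℤ (Localization.AtPrime P)) (p:ℤ))) < 1 := hval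
    rwa [hco] at hval2
  · intro m
    rw [A.valuation_le_one_iff]
    have : ((m : ℤ) : AlgebraicClosure ℚ) = f (algebraMap ℤ (Localization.AtPrime P) m) :=
      (hfeq m).symm
    rw [this]
    exact hA _

lemma val_nat_eq_one {F : Type*} [Field F] [CharZero F] (A : ValuationSubring F)
    (p : ℕ) (hp : p.Prime)
    (hvp : A.valuation (p : F) < 1)
    (hint : ∀ m : ℤ, A.valuation (m : F) ≤ 1)
    (n : ℕ) (h1 : 1 ≤ n) (h2 : n < p) : A.valuation (n : F) = 1 := by
  have hle : A.valuation (n : F) ≤ 1 := by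
    have := hint (n : ℤ)
    rwa [Int.cast_natCast] at this
  by_contra hne
  have hlt : A.valuation (n : F) < 1 := lt_of_le_of_ne hle hne
  have hcop : Nat.Coprime p n := (Nat.Prime.coprime_iff_not_dvd hp).mpr
    (fun h => by have := Nat.le_of_dvd (by omega) h; omega)
  have hbez := Nat.gcd_eq_gcd_ab p n
  rw [Nat.Coprime.gcd_eq_one hcop] at hbez
  have hF : (1 : F) = (p : F) * ((Nat.gcdA p n : ℤ) : F) + (n : F) * ((Nat.gcdB p n : ℤ) : F) := by
    have := congrArg (fun z : ℤ => (z : F)) hbez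
    push_cast at this
    simpa using this
  have hxa : A.valuation ((p : F) * ((Nat.gcdA p n : ℤ) : F)) < 1 := by
    rw [map_mul]
    have h3 := mul_le_mul_right (hint (Nat.gcdA p n)) (A.valuation (p : F))
    rw [mul_one] at h3
    exact lt_of_le_of_lt h3 hvp
  have hxb : A.valuation ((n : F) * ((Nat.gcdB p n : ℤ) : F)) < 1 := by
    rw [map_mul]
    have h3 := mul_le_mul_right (hint (Nat.gcdB p n)) (A.valuation (n : F))
    rw [mul_one] at h3
    exact lt_of_le_of_lt h3 hlt
  have hsum : A.valuation (1 : F) ≤ max (A.valuation ((p : F) * ((Nat.gcdA p n : ℤ) : F)))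
      (A.valuation ((n : F) * ((Nat.gcdB p n : ℤ) : F))) := by
    conv_lhs => rw [hF]
    exact Valuation.map_add _ _ _
  rw [map_one] at hsum
  exact absurd (lt_of_le_of_lt hsum (max_lt hxa hxb)) (lt_irrefl _)

section Lower
variable {K : Type*} [Field K] [CharZero K] [IsAlgClosed K]

set_option maxHeartbeats 1000000 in
theorem lower (p : ℕ) (hp : p.Prime) (A : ValuationSubring K)
    (hvp : A.valuation (p : K) < 1)
    (hint : ∀ m : ℤ, A.valuation (m : K) ≤ 1)
    (B : K[X]) (hB : IsBelyi B) (h0 : 0 < B.natDegree) (hltp : B.natDegree < p)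
    (hev : B.eval (p : K) ∈ ({0, 1} : Set K)) : False := by
  classical
  obtain ⟨hB0, hB1, hdvd⟩ := hB
  set d := B.natDegree with hd
  have hBne : B ≠ 0 := fun h => by simp [hd, h] at h0
  have hdeg1 : (B - 1).natDegree = d := by
    rw [show (1 : K[X]) = C 1 by simp, natDegree_sub_C]
  have hB1ne : (B - 1) ≠ 0 := by
    intro h
    rw [h, natDegree_zero] at hdeg1
    omega
  have hBB : B * (B - 1) ≠ 0 := mul_ne_zero hBne hB1ne
  -- special roots
  have hroot : ∀ x : K, B.eval x ∈ ({0, 1} : Set K) → x ∈ (B * (B - 1)).roots := by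
    intro x hx
    rw [mem_roots']
    refine ⟨hBB, ?_⟩
    show (B * (B - 1)).eval x = 0
    rw [eval_mul, eval_sub, eval_one]
    rcases hx with h | h
    · rw [h, zero_mul]
    · rw [Set.mem_singleton_iff] at h
      rw [h]
      ring
  have h0mem : (0 : K) ∈ (B * (B - 1)).roots := hroot 0 hB0
  have h1mem : (1 : K) ∈ (B * (B - 1)).roots := hroot 1 hB1
  have hpmem : ((p : ℕ) : K) ∈ (B * (B - 1)).roots := hroot _ hev
  have hpK0 : ((p : ℕ) : K) ≠ 0 := Nat.cast_ne_zero.mpr hp.ne_zero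
  have hpK1 : ((p : ℕ) : K) ≠ 1 := by
    intro h
    have : ((p : ℕ) : K) = ((1 : ℕ) : K) := by rw [h]; simp
    have := Nat.cast_injective (R := K) this
    omega
  -- the maximal pairwise valuation
  set Rt := (B * (B - 1)).roots with hRt
  set Q : Finset (K × K) := Rt.toFinset.offDiag with hQ
  have hQne : Q.Nonempty := ⟨(0, 1), Finset.mem_offDiag.mpr
    ⟨Multiset.mem_toFinset.mpr h0mem, Multiset.mem_toFinset.mpr h1mem, zero_ne_one⟩⟩
  set img := Q.image (fun q => A.valuation (q.1 - q.2)) with himg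
  have himgne : img.Nonempty := hQne.image _
  set ρ := img.max' himgne with hρ
  obtain ⟨q0, hq0Q, hq0⟩ := Finset.mem_image.mp (img.max'_mem himgne)
  obtain ⟨hq01, hq02, hq0ne⟩ := Finset.mem_offDiag.mp hq0Q
  set α := q0.1 - q0.2 with hα
  have hαne : α ≠ 0 := sub_ne_zero.mpr hq0ne
  have hvα : A.valuation α = ρ := hq0
  have hρ0 : ρ ≠ 0 := by
    rw [← hvα]
    exact (Valuation.ne_zero_iff _).mpr hαne
  have hge : ∀ s ∈ Rt, ∀ t ∈ Rt, A.valuation (s - t) ≤ ρ := by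
    intro s hs t ht
    by_cases hst : s = t
    · rw [hst, sub_self, map_zero]
      exact zero_le'
    · rw [hρ]
      refine Finset.le_max' _ _ ?_
      rw [himg]
      exact Finset.mem_image.mpr ⟨(s, t), Finset.mem_offDiag.mpr
        ⟨Multiset.mem_toFinset.mpr hs, Multiset.mem_toFinset.mpr ht, hst⟩, rfl⟩
  -- composed polynomial
  set Bh := B.comp (C α * X) with hBh
  have hdegh : Bh.natDegree = d := by
    rw [hBh, natDegree_comp, natDegree_C_mul_X α hαne, mul_one]
  have hd1 : 1 ≤ Bh.natDegree := by omega
  have hprod : Bh * (Bh - 1) = (B * (B - 1)).comp (C α * X) := by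
    rw [hBh, mul_comp, sub_comp, one_comp]
  have hBhne : Bh ≠ 0 := fun h => by rw [h, natDegree_zero] at hdegh; omega
  have hBh1ne : Bh - 1 ≠ 0 := by
    intro h
    have h2 : (Bh - 1).natDegree = d := by
      rw [show (1 : K[X]) = C 1 by simp, natDegree_sub_C, hdegh]
    rw [h, natDegree_zero] at h2
    omega
  have hBBh : Bh * (Bh - 1) ≠ 0 := mul_ne_zero hBhne hBh1ne
  -- dvd for composed
  obtain ⟨W, hW⟩ := hdvd
  have hCinv : C α * C α⁻¹ = 1 := by
    rw [← C_mul, mul_inv_cancel₀ hαne, C_1]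
  have hdvdh : derivative Bh ∣ Bh * (Bh - 1) := by
    refine ⟨C α⁻¹ * W.comp (C α * X), ?_⟩
    have h2 : derivative Bh = C α * (derivative B).comp (C α * X) := by
      rw [hBh, derivative_comp]
      have h3 : derivative (C α * X) = C α := by
        rw [derivative_C_mul, derivative_X, mul_one]
      rw [h3]
    rw [hprod, h2, hW, mul_comp]
    calc (derivative B).comp (C α * X) * W.comp (C α * X)
        = (C α * C α⁻¹) * ((derivative B).comp (C α * X) * W.comp (C α * X)) := by
          rw [hCinv, one_mul]
      _ = C α * (derivative B).comp (C α * X) * (C α⁻¹ * W.comp (C α * X)) := by ring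
  -- roots correspondence
  have hevc : ∀ y : K, (Bh * (Bh - 1)).eval y = (B * (B - 1)).eval (α * y) := by
    intro y
    have h4 : (C α * X).eval y = α * y := by rw [eval_mul, eval_C, eval_X]
    rw [hprod, eval_comp, h4]
  have hmemh : ∀ y : K, y ∈ (Bh * (Bh - 1)).roots ↔ (α * y) ∈ Rt := by
    intro y
    rw [mem_roots', mem_roots']
    constructor
    · rintro ⟨-, h⟩
      refine ⟨hBB, ?_⟩
      show (B * (B - 1)).eval (α * y) = 0
      rw [← hevc]
      exact h
    · rintro ⟨-, h⟩
      refine ⟨hBBh, ?_⟩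
      show (Bh * (Bh - 1)).eval y = 0
      rw [hevc]
      exact h
  -- hypotheses for core
  have hrootsh : ∀ s ∈ (Bh * (Bh - 1)).roots, A.valuation s ≤ 1 := by
    intro y hy
    have hmem := (hmemh y).mp hy
    have h1 : A.valuation (α * y) ≤ ρ := by
      have h2 := hge (α * y) hmem 0 h0mem
      rwa [sub_zero] at h2
    rw [map_mul, hvα] at h1
    have h3 := mul_le_mul_right h1 ρ⁻¹
    rwa [← mul_assoc, inv_mul_cancel₀ hρ0, one_mul] at h3
  have hpairh : ∃ s₁ ∈ (Bh * (Bh - 1)).roots, ∃ s₂ ∈ (Bh * (Bh - 1)).roots,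
      A.valuation (s₁ - s₂) = 1 := by
    refine ⟨α⁻¹ * q0.1, ?_, α⁻¹ * q0.2, ?_, ?_⟩
    · rw [hmemh, ← mul_assoc, mul_inv_cancel₀ hαne, one_mul]
      exact Multiset.mem_toFinset.mp hq01
    · rw [hmemh, ← mul_assoc, mul_inv_cancel₀ hαne, one_mul]
      exact Multiset.mem_toFinset.mp hq02
    · rw [← mul_sub, map_mul, map_inv₀, ← hα, hvα, inv_mul_cancel₀ hρ0]
  have hnh : ∀ n : ℕ, 1 ≤ n → n ≤ Bh.natDegree → A.valuation (n : K) = 1 := by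
    intro n hn1 hn2
    exact val_nat_eq_one A p hp hvp hint n hn1 (by omega)
  have hconc := core A Bh hd1 hdvdh hnh hrootsh hpairh
  -- apply conclusion to 0, α⁻¹, α⁻¹ * p
  have hy0 : (0 : K) ∈ (Bh * (Bh - 1)).roots := by
    rw [hmemh, mul_zero]
    exact h0mem
  have hy1 : (α⁻¹ : K) ∈ (Bh * (Bh - 1)).roots := by
    rw [hmemh, mul_inv_cancel₀ hαne]
    exact h1mem
  have hyp : (α⁻¹ * (p : K)) ∈ (Bh * (Bh - 1)).roots := by
    rw [hmemh, ← mul_assoc, mul_inv_cancel₀ hαne, one_mul]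
    exact hpmem
  have hne1 : (0 : K) ≠ α⁻¹ := fun h => (inv_ne_zero hαne) h.symm
  have hnep : (0 : K) ≠ α⁻¹ * (p : K) :=
    fun h => (mul_ne_zero (inv_ne_zero hαne) hpK0) h.symm
  have e1 := hconc 0 hy0 _ hy1 hne1
  have e2 := hconc 0 hy0 _ hyp hnep
  rw [zero_sub, Valuation.map_neg, map_inv₀, hvα, inv_eq_one] at e1
  rw [zero_sub, Valuation.map_neg, map_mul, map_inv₀, hvα, e1, inv_one, one_mul] at e2
  rw [e2] at hvp
  exact absurd hvp (lt_irrefl _)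

end Lower

end BelyiProof

set_option maxHeartbeats 1000000 in
/-- For a prime `p`, the polynomial `C X = X (p - X)^(p-1) / (p-1)^(p-1)` (which is
`B_{1,p}(X/p)`) is a Belyi polynomial of degree exactly `p` with `C p = 0`, `C 0 = 0` and
`C 1 = 1`; consequently the Belyi height of `p` (as an algebraic number) is exactly `p`. -/
theorem belyi_height_of_prime_eq (p : ℕ) (hp : p.Prime) :
    IsBelyi (C (1 / ((p : ℚ) - 1) ^ (p - 1)) * (X * (C (p : ℚ) - X) ^ (p - 1))) ∧
    (C (1 / ((p : ℚ) - 1) ^ (p - 1)) * (X * (C (p : ℚ) - X) ^ (p - 1))).natDegree = p ∧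
    (C (1 / ((p : ℚ) - 1) ^ (p - 1)) * (X * (C (p : ℚ) - X) ^ (p - 1))).eval (p : ℚ) = 0 ∧
    (C (1 / ((p : ℚ) - 1) ^ (p - 1)) * (X * (C (p : ℚ) - X) ^ (p - 1))).eval 0 = 0 ∧
    (C (1 / ((p : ℚ) - 1) ^ (p - 1)) * (X * (C (p : ℚ) - X) ^ (p - 1))).eval 1 = 1 ∧
    belyiHeight (AlgebraicClosure ℚ) (p : AlgebraicClosure ℚ) = p := by
  classical
  have hBelyiQ : IsBelyi (C (1 / ((p : ℚ) - 1) ^ (p - 1)) * (X * (C (p : ℚ) - X) ^ (p - 1))) := by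
    refine ⟨?_, ?_, BelyiProof.dvd_lemma p hp⟩
    · rw [BelyiProof.eval0 p]
      exact Set.mem_insert _ _
    · rw [BelyiProof.eval1 p hp]
      exact Set.mem_insert_of_mem _ rfl
  refine ⟨hBelyiQ, BelyiProof.natDeg p hp, BelyiProof.evalp p hp, BelyiProof.eval0 p,
    BelyiProof.eval1 p hp, ?_⟩
  set F := AlgebraicClosure ℚ with hF
  set ι : ℚ →+* F := algebraMap ℚ F with hι
  set P : ℚ[X] := C (1 / ((p : ℚ) - 1) ^ (p - 1)) * (X * (C (p : ℚ) - X) ^ (p - 1)) with hPd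
  set BF : F[X] := P.map ι with hBF
  have hevF : ∀ x : ℚ, BF.eval (ι x) = ι (P.eval x) := by
    intro x
    rw [hBF, eval_map, eval₂_at_apply]
  have hev0 : BF.eval 0 = 0 := by
    rw [show (0 : F) = ι 0 from (map_zero ι).symm, hevF, hPd, BelyiProof.eval0 p, map_zero]
  have hev1 : BF.eval 1 = 1 := by
    rw [show (1 : F) = ι 1 from (map_one ι).symm, hevF, hPd, BelyiProof.eval1 p hp, map_one]
  have hevp : BF.eval ((p : ℕ) : F) = 0 := by
    rw [show ((p : ℕ) : F) = ι ((p : ℕ) : ℚ) from (map_natCast ι p).symm, hevF, hPd,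
      BelyiProof.evalp p hp, map_zero]
  have hdegF : BF.natDegree = p := by
    rw [hBF, natDegree_map, hPd, BelyiProof.natDeg p hp]
  have hdvdF : derivative BF ∣ BF * (BF - 1) := by
    obtain ⟨W, hW⟩ := BelyiProof.dvd_lemma p hp
    refine ⟨W.map ι, ?_⟩
    calc BF * (BF - 1) = (P * (P - 1)).map ι := by
          rw [Polynomial.map_mul, Polynomial.map_sub, Polynomial.map_one]
      _ = (derivative P * W).map ι := by rw [hPd, hW]
      _ = derivative BF * W.map ι := by rw [Polynomial.map_mul, ← derivative_map]
  have hBelyiF : IsBelyi BF := by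
    refine ⟨?_, ?_, hdvdF⟩
    · rw [hev0]
      exact Set.mem_insert _ _
    · rw [hev1]
      exact Set.mem_insert_of_mem _ rfl
  have hmem : p ∈ {d : ℕ | ∃ B : F[X], IsBelyi B ∧ 0 < B.natDegree ∧ B.natDegree = d ∧
      B.eval ((p : ℕ) : F) ∈ ({0, 1} : Set F)} := by
    refine ⟨BF, hBelyiF, ?_, hdegF, ?_⟩
    · rw [hdegF]
      exact hp.pos
    · rw [hevp]
      exact Set.mem_insert _ _
  obtain ⟨A, hvp, hint⟩ := BelyiProof.exists_val p hp
  show sInf _ = p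
  apply le_antisymm
  · exact Nat.sInf_le hmem
  · refine le_csInf ⟨p, hmem⟩ ?_
    rintro b ⟨Bb, hBb, hpos, hdeg, hevb⟩
    by_contra hbp
    push_neg at hbp
    exact BelyiProof.lower p hp A hvp hint Bb hBb hpos (by rw [hdeg]; omega) hevb
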